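/- Let a^{jk} (1 ≤ j,k ≤ N) be real-valued C² functions on ℝ^N with a^{jk} = a^{kj}, let ℓ be a real-valued C³ function and v a real-valued C² function on ℝ^N. Set I₂ := a^{jk}(v_{jk} + ℓ_j ℓ_k v) and I₁ := −2 a^{jk} ℓ_j v_k. Then at every point of ℝ^N: 2 I₂ I₁ = 4 (a^{jk} a^{j'k'} ℓ_{j'})_j v_{k'} v_k − 2 (a^{jk} a^{j'k'} ℓ_{j'})_{k'} v_j v_k + 2 (a^{jk} a^{j'k'} ℓ_{j'} ℓ_{k'} ℓ_k)_j v² + ∂_j [ a^{jk} a^{j'k'} ( 2 ℓ_k v_{j'} v_{k'} − 4 ℓ_{j'} v_k v_{k'} − 2 ℓ_{j'} ℓ_{k'} ℓ_k v² ) ]. -/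

import Mathlib

/-- Partial derivative `∂_j` of a real-valued function on `ℝ^N`. -/
noncomputable def pd {N : ℕ} (j : Fin N) (w : (Fin N → ℝ) → ℝ) : (Fin N → ℝ) → ℝ :=
  fun x => fderiv ℝ w x (Pi.single j 1)

section helpers
variable {N : ℕ} {p : Fin N → ℝ}

lemma contDiff_pd {m n : WithTop ℕ∞} {w : (Fin N → ℝ) → ℝ} (j : Fin N)
    (hw : ContDiff ℝ n w) (h : m + 1 ≤ n) : ContDiff ℝ m (pd j w) := by
  have : pd j w = fun x =>
      (ContinuousLinearMap.apply ℝ ℝ (Pi.single j 1 : Fin N → ℝ)) (fderiv ℝ w x) := rfl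
  rw [this]
  exact (ContinuousLinearMap.apply ℝ ℝ (Pi.single j 1)).contDiff.comp (hw.fderiv_right h)

lemma pd_comm {w : (Fin N → ℝ) → ℝ} (hw : ContDiff ℝ 2 w) (j k : Fin N) :
    pd j (pd k w) p = pd k (pd j w) p := by
  have hsymm : IsSymmSndFDerivAt ℝ w p :=
    (hw.contDiffAt).isSymmSndFDerivAt (by simp)
  have hd : DifferentiableAt ℝ (fderiv ℝ w) p :=
    ((hw.fderiv_right (m := 1) (by norm_num)).differentiable (by norm_num)) p
  have key : ∀ u : Fin N → ℝ,
      fderiv ℝ (fun x => fderiv ℝ w x u) p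
        = (ContinuousLinearMap.apply ℝ ℝ u).comp (fderiv ℝ (fderiv ℝ w) p) := by
    intro u
    exact ((ContinuousLinearMap.apply ℝ ℝ u).hasFDerivAt.comp p hd.hasFDerivAt).fderiv
  show fderiv ℝ (fun x => fderiv ℝ w x (Pi.single k 1)) p (Pi.single j 1)
      = fderiv ℝ (fun x => fderiv ℝ w x (Pi.single j 1)) p (Pi.single k 1)
  rw [key, key]
  simp only [ContinuousLinearMap.coe_comp', Function.comp_apply,
    ContinuousLinearMap.apply_apply]
  exact hsymm _ _

lemma pd_mul {f g : (Fin N → ℝ) → ℝ} (hf : DifferentiableAt ℝ f p)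
    (hg : DifferentiableAt ℝ g p) (j : Fin N) :
    pd j (fun x => f x * g x) p = pd j f p * g p + f p * pd j g p := by
  simp only [pd]
  rw [fderiv_fun_mul hf hg]
  simp only [ContinuousLinearMap.add_apply, ContinuousLinearMap.smul_apply, smul_eq_mul]
  ring

lemma pd_sub {f g : (Fin N → ℝ) → ℝ} (hf : DifferentiableAt ℝ f p)
    (hg : DifferentiableAt ℝ g p) (j : Fin N) :
    pd j (fun x => f x - g x) p = pd j f p - pd j g p := by
  simp only [pd]
  rw [fderiv_fun_sub hf hg]
  simp

lemma pd_const_mul {f : (Fin N → ℝ) → ℝ} (hf : DifferentiableAt ℝ f p) (c : ℝ) (j : Fin N) :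
    pd j (fun x => c * f x) p = c * pd j f p := by
  simp only [pd]
  rw [fderiv_const_mul hf c]
  simp

lemma pd_sq {f : (Fin N → ℝ) → ℝ} (hf : DifferentiableAt ℝ f p) (j : Fin N) :
    pd j (fun x => f x ^ 2) p = 2 * f p * pd j f p := by
  have h : (fun x => f x ^ 2) = fun x => f x * f x := by funext x; ring
  rw [h, pd_mul hf hf]
  ring

lemma pd_sum {ι : Type*} {s : Finset ι} (f : ι → (Fin N → ℝ) → ℝ)
    (h : ∀ i ∈ s, DifferentiableAt ℝ (f i) p) (j : Fin N) :
    pd j (fun x => ∑ i ∈ s, f i x) p = ∑ i ∈ s, pd j (f i) p := by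
  simp only [pd]
  rw [fderiv_fun_sum h]
  simp

end helpers

section sums
variable {N : ℕ}

lemma sum4_swap12 (f : Fin N → Fin N → Fin N → Fin N → ℝ) :
    (∑ a, ∑ b, ∑ c, ∑ d, f a b c d) = ∑ a, ∑ b, ∑ c, ∑ d, f b a c d :=
  Finset.sum_comm

lemma sum4_swap34 (f : Fin N → Fin N → Fin N → Fin N → ℝ) :
    (∑ a, ∑ b, ∑ c, ∑ d, f a b c d) = ∑ a, ∑ b, ∑ c, ∑ d, f a b d c :=
  Finset.sum_congr rfl fun _ _ => Finset.sum_congr rfl fun _ _ => Finset.sum_comm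

lemma sum4_block (f : Fin N → Fin N → Fin N → Fin N → ℝ) :
    (∑ a, ∑ b, ∑ c, ∑ d, f a b c d) = ∑ a, ∑ b, ∑ c, ∑ d, f c d a b := by
  calc (∑ a, ∑ b, ∑ c, ∑ d, f a b c d)
      = ∑ a, ∑ c, ∑ b, ∑ d, f a b c d :=
        Finset.sum_congr rfl fun _ _ => Finset.sum_comm
    _ = ∑ c, ∑ a, ∑ b, ∑ d, f a b c d := Finset.sum_comm
    _ = ∑ c, ∑ a, ∑ d, ∑ b, f a b c d :=
        Finset.sum_congr rfl fun _ _ => Finset.sum_congr rfl fun _ _ => Finset.sum_comm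
    _ = ∑ c, ∑ d, ∑ a, ∑ b, f a b c d :=
        Finset.sum_congr rfl fun _ _ => Finset.sum_comm

lemma sum4_ext (f g : Fin N → Fin N → Fin N → Fin N → ℝ)
    (h : ∀ a b c d : Fin N,
      f a b c d + f b a c d + f a b d c + f b a d c
        + f c d a b + f c d b a + f d c a b + f d c b a
      = g a b c d + g b a c d + g a b d c + g b a d c
        + g c d a b + g c d b a + g d c a b + g d c b a) :
    (∑ a, ∑ b, ∑ c, ∑ d, f a b c d) = ∑ a, ∑ b, ∑ c, ∑ d, g a b c d := by
  have key : ∀ F : Fin N → Fin N → Fin N → Fin N → ℝ,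
      (∑ a, ∑ b, ∑ c, ∑ d, (F a b c d + F b a c d + F a b d c + F b a d c
        + F c d a b + F c d b a + F d c a b + F d c b a))
      = 8 * ∑ a, ∑ b, ∑ c, ∑ d, F a b c d := by
    intro F
    have h1 := sum4_swap12 F
    have h2 := sum4_swap34 F
    have h3 := sum4_swap34 (fun a b c d => F b a c d)
    have h4 := sum4_block F
    have h5 := sum4_swap12 (fun a b c d => F c d a b)
    have h6 := sum4_swap34 (fun a b c d => F c d a b)
    have h7 := sum4_swap34 (fun a b c d => F c d b a)
    simp only [Finset.sum_add_distrib]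
    rw [← h1, ← (h1.trans h3), ← h2, ← h4, ← (h4.trans h5), ← (h4.trans h6),
      ← ((h4.trans h5).trans h7)]
    ring
  have hfg : (∑ a, ∑ b, ∑ c, ∑ d, (f a b c d + f b a c d + f a b d c + f b a d c
        + f c d a b + f c d b a + f d c a b + f d c b a))
      = ∑ a, ∑ b, ∑ c, ∑ d, (g a b c d + g b a c d + g a b d c + g b a d c
        + g c d a b + g c d b a + g d c a b + g d c b a) :=
    Finset.sum_congr rfl fun a _ => Finset.sum_congr rfl fun b _ =>
      Finset.sum_congr rfl fun c _ => Finset.sum_congr rfl fun d _ => h a b c d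
  have := (key f).symm.trans (hfg.trans (key g))
  linarith

end sums

/-- `I₂ := a^{jk}(v_{jk} + ℓ_j ℓ_k v)` (summed over `j,k`). -/
noncomputable def I2 {N : ℕ} (a : Fin N → Fin N → (Fin N → ℝ) → ℝ)
    (l v : (Fin N → ℝ) → ℝ) : (Fin N → ℝ) → ℝ :=
  fun x => ∑ j, ∑ k, a j k x * (pd j (pd k v) x + pd j l x * pd k l x * v x)

/-- `I₁ := −2 a^{jk} ℓ_j v_k` (summed over `j,k`). -/
noncomputable def I1 {N : ℕ} (a : Fin N → Fin N → (Fin N → ℝ) → ℝ)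
    (l v : (Fin N → ℝ) → ℝ) : (Fin N → ℝ) → ℝ :=
  fun x => -2 * ∑ j, ∑ k, a j k x * pd j l x * pd k v x

/-- cross-term identity for `2I₂I₁`, eq. (2.10) in the proof of
Proposition 2.3 of the paper. -/
theorem cross_term_I2_I1 {N : ℕ} (hN : 1 ≤ N)
    (a : Fin N → Fin N → (Fin N → ℝ) → ℝ) (ha : ∀ j k, ContDiff ℝ 2 (a j k))
    (hsym : ∀ j k, a j k = a k j)
    (l v : (Fin N → ℝ) → ℝ) (hl : ContDiff ℝ 3 l) (hv : ContDiff ℝ 2 v)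
    (p : Fin N → ℝ) :
    2 * I2 a l v p * I1 a l v p =
      4 * ∑ j, ∑ k, ∑ j', ∑ k',
          pd j (fun x => a j k x * a j' k' x * pd j' l x) p * pd k' v p * pd k v p
        - 2 * ∑ j, ∑ k, ∑ j', ∑ k',
            pd k' (fun x => a j k x * a j' k' x * pd j' l x) p * pd j v p * pd k v p
        + 2 * ∑ j, ∑ k, ∑ j', ∑ k',
            pd j (fun x => a j k x * a j' k' x * pd j' l x * pd k' l x * pd k l x) p
              * v p ^ 2
        + ∑ j, pd j (fun x => ∑ k, ∑ j', ∑ k',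
            a j k x * a j' k' x *
              (2 * pd k l x * pd j' v x * pd k' v x
                - 4 * pd j' l x * pd k v x * pd k' v x
                - 2 * pd j' l x * pd k' l x * pd k l x * v x ^ 2)) p := by
  -- differentiability facts
  have Da : ∀ j k : Fin N, DifferentiableAt ℝ (a j k) p :=
    fun j k => ((ha j k).differentiable (by norm_num)) p
  have hl2 : ∀ i : Fin N, ContDiff ℝ 2 (pd i l) := fun i => contDiff_pd i hl (by norm_num)
  have Dl1 : ∀ i : Fin N, DifferentiableAt ℝ (pd i l) p :=
    fun i => ((hl2 i).differentiable (by norm_num)) p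
  have Dv1 : ∀ i : Fin N, DifferentiableAt ℝ (pd i v) p :=
    fun i => ((contDiff_pd (m := 1) i hv (by norm_num)).differentiable (by norm_num)) p
  have Dv : DifferentiableAt ℝ v p := (hv.differentiable (by norm_num)) p
  -- expansions of the pd-of-product terms
  have hT1 : ∀ j k j' k' : Fin N,
      pd j (fun x => a j k x * a j' k' x * pd j' l x) p
      = (pd j (a j k) p * a j' k' p + a j k p * pd j (a j' k') p) * pd j' l p
        + a j k p * a j' k' p * pd j (pd j' l) p := by
    intro j k j' k'
    rw [pd_mul ((Da j k).fun_mul (Da j' k')) (Dl1 j') j, pd_mul (Da j k) (Da j' k') j]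
  have hT2 : ∀ j k j' k' : Fin N,
      pd k' (fun x => a j k x * a j' k' x * pd j' l x) p
      = (pd k' (a j k) p * a j' k' p + a j k p * pd k' (a j' k') p) * pd j' l p
        + a j k p * a j' k' p * pd k' (pd j' l) p := by
    intro j k j' k'
    rw [pd_mul ((Da j k).fun_mul (Da j' k')) (Dl1 j') k', pd_mul (Da j k) (Da j' k') k']
  have hT3 : ∀ j k j' k' : Fin N,
      pd j (fun x => a j k x * a j' k' x * pd j' l x * pd k' l x * pd k l x) p
      = (((pd j (a j k) p * a j' k' p + a j k p * pd j (a j' k') p) * pd j' l p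
            + a j k p * a j' k' p * pd j (pd j' l) p) * pd k' l p
          + a j k p * a j' k' p * pd j' l p * pd j (pd k' l) p) * pd k l p
        + a j k p * a j' k' p * pd j' l p * pd k' l p * pd j (pd k l) p := by
    intro j k j' k'
    rw [pd_mul ((((Da j k).fun_mul (Da j' k')).fun_mul (Dl1 j')).fun_mul (Dl1 k')) (Dl1 k) j,
      pd_mul (((Da j k).fun_mul (Da j' k')).fun_mul (Dl1 j')) (Dl1 k') j,
      pd_mul ((Da j k).fun_mul (Da j' k')) (Dl1 j') j, pd_mul (Da j k) (Da j' k') j]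
  have hF : ∀ j k j' k' : Fin N,
      pd j (fun x => a j k x * a j' k' x *
          (2 * pd k l x * pd j' v x * pd k' v x
            - 4 * pd j' l x * pd k v x * pd k' v x
            - 2 * pd j' l x * pd k' l x * pd k l x * v x ^ 2)) p
      = (pd j (a j k) p * a j' k' p + a j k p * pd j (a j' k') p) *
          (2 * pd k l p * pd j' v p * pd k' v p
            - 4 * pd j' l p * pd k v p * pd k' v p
            - 2 * pd j' l p * pd k' l p * pd k l p * v p ^ 2)
        + a j k p * a j' k' p *
          (((2 * pd j (pd k l) p * pd j' v p + 2 * pd k l p * pd j (pd j' v) p) * pd k' v p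
              + 2 * pd k l p * pd j' v p * pd j (pd k' v) p)
            - (((4 * pd j (pd j' l) p * pd k v p + 4 * pd j' l p * pd j (pd k v) p) * pd k' v p
              + 4 * pd j' l p * pd k v p * pd j (pd k' v) p))
            - ((((2 * pd j (pd j' l) p * pd k' l p + 2 * pd j' l p * pd j (pd k' l) p) * pd k l p
              + 2 * pd j' l p * pd k' l p * pd j (pd k l) p) * v p ^ 2
              + 2 * pd j' l p * pd k' l p * pd k l p * (2 * v p * pd j v p)))) := by
    intro j k j' k'
    rw [pd_mul ((Da j k).fun_mul (Da j' k'))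
        ((((((Dl1 k).const_mul 2).fun_mul (Dv1 j')).fun_mul (Dv1 k')).fun_sub
          ((((Dl1 j').const_mul 4).fun_mul (Dv1 k)).fun_mul (Dv1 k'))).fun_sub
          (((((Dl1 j').const_mul 2).fun_mul (Dl1 k')).fun_mul (Dl1 k)).fun_mul (Dv.fun_pow 2))) j,
      pd_sub (((((Dl1 k).const_mul 2).fun_mul (Dv1 j')).fun_mul (Dv1 k')).fun_sub
          ((((Dl1 j').const_mul 4).fun_mul (Dv1 k)).fun_mul (Dv1 k')))
        (((((Dl1 j').const_mul 2).fun_mul (Dl1 k')).fun_mul (Dl1 k)).fun_mul (Dv.fun_pow 2)) j,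
      pd_sub ((((Dl1 k).const_mul 2).fun_mul (Dv1 j')).fun_mul (Dv1 k'))
        ((((Dl1 j').const_mul 4).fun_mul (Dv1 k)).fun_mul (Dv1 k')) j,
      pd_mul (((Dl1 k).const_mul 2).fun_mul (Dv1 j')) (Dv1 k') j,
      pd_mul ((Dl1 k).const_mul 2) (Dv1 j') j, pd_const_mul (Dl1 k) 2 j,
      pd_mul (((Dl1 j').const_mul 4).fun_mul (Dv1 k)) (Dv1 k') j,
      pd_mul ((Dl1 j').const_mul 4) (Dv1 k) j, pd_const_mul (Dl1 j') 4 j,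
      pd_mul ((((Dl1 j').const_mul 2).fun_mul (Dl1 k')).fun_mul (Dl1 k)) (Dv.fun_pow 2) j,
      pd_mul (((Dl1 j').const_mul 2).fun_mul (Dl1 k')) (Dl1 k) j,
      pd_mul ((Dl1 j').const_mul 2) (Dl1 k') j, pd_const_mul (Dl1 j') 2 j,
      pd_sq Dv j, pd_mul (Da j k) (Da j' k') j]
  have hT4 : ∀ j : Fin N,
      pd j (fun x => ∑ k, ∑ j', ∑ k',
          a j k x * a j' k' x *
            (2 * pd k l x * pd j' v x * pd k' v x
              - 4 * pd j' l x * pd k v x * pd k' v x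
              - 2 * pd j' l x * pd k' l x * pd k l x * v x ^ 2)) p
      = ∑ k, ∑ j', ∑ k', pd j (fun x =>
          a j k x * a j' k' x *
            (2 * pd k l x * pd j' v x * pd k' v x
              - 4 * pd j' l x * pd k v x * pd k' v x
              - 2 * pd j' l x * pd k' l x * pd k l x * v x ^ 2)) p := by
    intro j
    have DG : ∀ k j' k' : Fin N, DifferentiableAt ℝ (fun x =>
        a j k x * a j' k' x *
          (2 * pd k l x * pd j' v x * pd k' v x
            - 4 * pd j' l x * pd k v x * pd k' v x
            - 2 * pd j' l x * pd k' l x * pd k l x * v x ^ 2)) p := fun k j' k' =>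
      ((Da j k).mul (Da j' k')).mul
        ((((((Dl1 k).const_mul 2).mul (Dv1 j')).mul (Dv1 k')).sub
          ((((Dl1 j').const_mul 4).mul (Dv1 k)).mul (Dv1 k'))).sub
          (((((Dl1 j').const_mul 2).mul (Dl1 k')).mul (Dl1 k)).mul (Dv.pow 2)))
    rw [pd_sum _ (fun k _ => DifferentiableAt.fun_sum fun j' _ =>
        DifferentiableAt.fun_sum fun k' _ => DG k j' k') j]
    refine Finset.sum_congr rfl fun k _ => ?_
    rw [pd_sum _ (fun j' _ => DifferentiableAt.fun_sum fun k' _ => DG k j' k') j]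
    refine Finset.sum_congr rfl fun j' _ => ?_
    rw [pd_sum _ (fun k' _ => DG k j' k') j]
  -- rewrite everything pointwise
  simp only [I2, I1, hT1, hT2, hT3, hT4, hF]
  -- split the symmetric atoms
  obtain ⟨A, hA⟩ : ∃ A : Fin N → Fin N → ℝ, ∀ j k, a j k p = A j k + A k j :=
    ⟨fun j k => a j k p / 2, fun j k => by
      show a j k p = a j k p / 2 + a k j p / 2
      rw [show a k j = a j k from (hsym j k).symm]; ring⟩
  obtain ⟨C, hC⟩ : ∃ C : Fin N → Fin N → Fin N → ℝ,
      ∀ i j k, pd i (a j k) p = C i j k + C i k j :=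
    ⟨fun i j k => pd i (a j k) p / 2, fun i j k => by
      show pd i (a j k) p = pd i (a j k) p / 2 + pd i (a k j) p / 2
      rw [show a k j = a j k from (hsym j k).symm]; ring⟩
  obtain ⟨M, hM⟩ : ∃ M : Fin N → Fin N → ℝ, ∀ i j, pd i (pd j l) p = M i j + M j i :=
    ⟨fun i j => pd i (pd j l) p / 2, fun i j => by
      show pd i (pd j l) p = pd i (pd j l) p / 2 + pd j (pd i l) p / 2
      have := pd_comm (p := p) (hl.of_le (by norm_num)) j i; linarith⟩
  obtain ⟨W, hW⟩ : ∃ W : Fin N → Fin N → ℝ, ∀ i j, pd i (pd j v) p = W i j + W j i :=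
    ⟨fun i j => pd i (pd j v) p / 2, fun i j => by
      show pd i (pd j v) p = pd i (pd j v) p / 2 + pd j (pd i v) p / 2
      have := pd_comm (p := p) hv j i; linarith⟩
  simp only [hC, hM, hW, hA]
  -- normalize both sides into a single quadruple sum
  simp only [Finset.mul_sum, Finset.sum_mul, ← Finset.sum_sub_distrib,
    ← Finset.sum_add_distrib]
  refine sum4_ext _ _ ?_
  intro a b c d
  ring
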